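/- For every continuously differentiable function f : [0,∞) → ℝ and every t ≥ 0, one has ∫_t^∞ e^{-s} f(s)² ds ≤ 2 e^{-t} f(t)² + 4 ∫_t^∞ e^{-s} f'(s)² ds, where both integrals are understood with values in [0,∞], so that the inequality holds regardless of the finiteness of the integrals. -/

import Mathlib

open MeasureTheory Set Filter

private lemma finite_interval_bound (f f' : ℝ → ℝ)
    (hderiv : ∀ s ∈ Set.Ici (0 : ℝ), HasDerivWithinAt f (f' s) (Set.Ici 0) s)
    (hcont : ContinuousOn f' (Set.Ici 0))
    (t T : ℝ) (ht : 0 ≤ t) (hT : t ≤ T) :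
    (∫ s in Set.Ioc t T, Real.exp (-s) * (f s) ^ 2)
      ≤ 2 * Real.exp (-t) * (f t) ^ 2
        + 4 * ∫ s in Set.Ioc t T, Real.exp (-s) * (f' s) ^ 2 := by
  have hfc : ContinuousOn f (Set.Ici 0) := fun s hs => (hderiv s hs).continuousWithinAt
  have hsub : Set.Icc t T ⊆ Set.Ici (0 : ℝ) := fun x hx => le_trans ht hx.1
  set F : ℝ → ℝ := fun s => Real.exp (-s) * (f s) ^ 2 with hF
  set G : ℝ → ℝ := fun s => Real.exp (-s) * (2 * f s * f' s - (f s) ^ 2) with hG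
  have hexpc : Continuous fun s : ℝ => Real.exp (-s) := Real.continuous_exp.comp continuous_neg
  have hFc : ContinuousOn F (Set.Icc t T) :=
    (hexpc.continuousOn).mul (((hfc.mono hsub)).pow 2)
  have hGc : ContinuousOn G (Set.Icc t T) := by
    refine (hexpc.continuousOn).mul ?_
    exact (((continuousOn_const.mul (hfc.mono hsub)).mul (hcont.mono hsub)).sub
      ((hfc.mono hsub).pow 2))
  have hFderiv : ∀ x ∈ Set.Ioo t T, HasDerivWithinAt F (G x) (Set.Ioi x) x := by
    intro x hx
    have hx0 : 0 < x := lt_of_le_of_lt ht hx.1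
    have hfx : HasDerivAt f (f' x) x :=
      (hderiv x hx0.le).hasDerivAt (Ici_mem_nhds hx0)
    have h1 : HasDerivAt (fun s : ℝ => Real.exp (-s)) (-Real.exp (-x)) x := by
      simpa using (hasDerivAt_neg x).exp
    have h2 : HasDerivAt (fun s => (f s) ^ 2) (2 * f x * f' x) x := by
      exact (hfx.fun_pow 2).congr_deriv (by push_cast; ring)
    have := h1.mul h2
    have h3 : HasDerivAt F (G x) x := by
      refine this.congr_deriv ?_
      simp only [hF, hG]; ring
    exact h3.hasDerivWithinAt
  have hGint : IntervalIntegrable G MeasureTheory.volume t T := by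
    apply ContinuousOn.intervalIntegrable
    rwa [Set.uIcc_of_le hT]
  have hftc : ∫ s in t..T, G s = F T - F t :=
    intervalIntegral.integral_eq_sub_of_hasDeriv_right_of_le hT hFc hFderiv hGint
  rw [intervalIntegral.integral_of_le hT] at hftc
  -- integrabilities
  have I1 : IntegrableOn (fun s => Real.exp (-s) * (f s) ^ 2) (Set.Ioc t T) :=
    (hFc.integrableOn_Icc).mono_set Set.Ioc_subset_Icc_self
  have I2 : IntegrableOn (fun s => Real.exp (-s) * (f' s) ^ 2) (Set.Ioc t T) := by
    refine (ContinuousOn.integrableOn_Icc ?_).mono_set Set.Ioc_subset_Icc_self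
    exact (hexpc.continuousOn).mul ((hcont.mono hsub).pow 2)
  have I4 : IntegrableOn (fun s => Real.exp (-s) * (2 * f s * f' s)) (Set.Ioc t T) := by
    refine (ContinuousOn.integrableOn_Icc ?_).mono_set Set.Ioc_subset_Icc_self
    exact (hexpc.continuousOn).mul ((continuousOn_const.mul (hfc.mono hsub)).mul
      (hcont.mono hsub))
  have IG : IntegrableOn G (Set.Ioc t T) := by
    have : G = fun s => Real.exp (-s) * (2 * f s * f' s) -
        Real.exp (-s) * (f s) ^ 2 := by
      funext s; simp only [hG]; ring
    rw [this]; exact I4.sub I1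
  set A := ∫ s in Set.Ioc t T, Real.exp (-s) * (f s) ^ 2 with hA
  set B := ∫ s in Set.Ioc t T, Real.exp (-s) * (f' s) ^ 2 with hB
  -- split the FTC integral
  have hsplit : (∫ s in Set.Ioc t T, G s)
      = (∫ s in Set.Ioc t T, Real.exp (-s) * (2 * f s * f' s)) - A := by
    rw [hA, ← integral_sub I4 I1]
    congr 1; funext s; simp only [hG]; ring
  -- Young's inequality bound
  have hmono : (∫ s in Set.Ioc t T, Real.exp (-s) * (2 * f s * f' s))
      ≤ ∫ s in Set.Ioc t T,
          ((1/2) * (Real.exp (-s) * (f s) ^ 2) + 2 * (Real.exp (-s) * (f' s) ^ 2)) := by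
    refine setIntegral_mono_on I4 ((I1.const_mul _).add (I2.const_mul _))
      measurableSet_Ioc ?_
    intro s _
    nlinarith [mul_nonneg (Real.exp_pos (-s)).le (sq_nonneg (f s - 2 * f' s))]
  have hsum : (∫ s in Set.Ioc t T,
      ((1/2) * (Real.exp (-s) * (f s) ^ 2) + 2 * (Real.exp (-s) * (f' s) ^ 2)))
      = (1/2) * A + 2 * B := by
    rw [integral_add (I1.const_mul _) (I2.const_mul _), integral_const_mul, integral_const_mul]
  have hFT : 0 ≤ F T := mul_nonneg (Real.exp_pos _).le (sq_nonneg _)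
  have hFt : F t = Real.exp (-t) * (f t) ^ 2 := rfl
  have : F T - F t = (∫ s in Set.Ioc t T, Real.exp (-s) * (2 * f s * f' s)) - A := by
    rw [← hsplit, hftc]
  linarith [hmono, hsum.le, hsum.ge]

theorem wide_poincare_weighted (f f' : ℝ → ℝ)
    (hderiv : ∀ s ∈ Set.Ici (0 : ℝ), HasDerivWithinAt f (f' s) (Set.Ici 0) s)
    (hcont : ContinuousOn f' (Set.Ici 0))
    (t : ℝ) (ht : 0 ≤ t) :
    (∫⁻ s in Set.Ioi t, ENNReal.ofReal (Real.exp (-s) * (f s) ^ 2))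
      ≤ ENNReal.ofReal (2 * Real.exp (-t) * (f t) ^ 2)
        + 4 * ∫⁻ s in Set.Ioi t, ENNReal.ofReal (Real.exp (-s) * (f' s) ^ 2) := by
  have hfc : ContinuousOn f (Set.Ici 0) := fun s hs => (hderiv s hs).continuousWithinAt
  have hIoi : Set.Ioi t ⊆ Set.Ici (0 : ℝ) := fun x hx => le_trans ht (le_of_lt hx)
  -- AE measurability of the integrand on Ioi t
  have hmeas : AEMeasurable (fun s => ENNReal.ofReal (Real.exp (-s) * (f s) ^ 2))
      (MeasureTheory.volume.restrict (Set.Ioi t)) := by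
    have h1 : AEMeasurable f (MeasureTheory.volume.restrict (Set.Ici (0:ℝ))) :=
      hfc.aemeasurable measurableSet_Ici
    have h2 : AEMeasurable f (MeasureTheory.volume.restrict (Set.Ioi t)) :=
      h1.mono_measure (Measure.restrict_mono hIoi le_rfl)
    exact (ENNReal.measurable_ofReal.comp_aemeasurable
      (((Real.continuous_exp.comp continuous_neg).aemeasurable).mul (h2.pow_const 2)))
  -- the cover Ioc t n, n : ℕ
  have hcover : AECover (MeasureTheory.volume.restrict (Set.Ioi t)) atTop
      (fun n : ℕ => Set.Iic (n : ℝ)) :=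
    aecover_Iic tendsto_natCast_atTop_atTop
  have htend := hcover.lintegral_tendsto_of_countably_generated hmeas
  refine le_of_tendsto htend (Filter.eventually_atTop.2 ⟨⌈t⌉₊, fun n hn => ?_⟩)
  have htn : t ≤ (n : ℝ) := le_trans (Nat.le_ceil t) (Nat.cast_le.2 hn)
  have hrw : (∫⁻ s in Set.Iic (n:ℝ), ENNReal.ofReal (Real.exp (-s) * (f s) ^ 2)
        ∂(MeasureTheory.volume.restrict (Set.Ioi t)))
      = ∫⁻ s in Set.Ioc t (n:ℝ), ENNReal.ofReal (Real.exp (-s) * (f s) ^ 2) := by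
    rw [Measure.restrict_restrict measurableSet_Iic]
    have hset : Set.Iic (n:ℝ) ∩ Set.Ioi t = Set.Ioc t (n:ℝ) := by
      ext x; simp [and_comm]
    rw [hset]
  rw [hrw]
  -- integrability on the finite interval
  have hsub : Set.Icc t (n:ℝ) ⊆ Set.Ici (0 : ℝ) := fun x hx => le_trans ht hx.1
  have hexpc : Continuous fun s : ℝ => Real.exp (-s) := Real.continuous_exp.comp continuous_neg
  have I1 : IntegrableOn (fun s => Real.exp (-s) * (f s) ^ 2) (Set.Ioc t (n:ℝ)) := by
    refine (ContinuousOn.integrableOn_Icc ?_).mono_set Set.Ioc_subset_Icc_self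
    exact (hexpc.continuousOn).mul ((hfc.mono hsub).pow 2)
  have I2 : IntegrableOn (fun s => Real.exp (-s) * (f' s) ^ 2) (Set.Ioc t (n:ℝ)) := by
    refine (ContinuousOn.integrableOn_Icc ?_).mono_set Set.Ioc_subset_Icc_self
    exact (hexpc.continuousOn).mul ((hcont.mono hsub).pow 2)
  have hnn1 : (0:ℝ→ℝ) ≤ᵐ[MeasureTheory.volume.restrict (Set.Ioc t (n:ℝ))]
      fun s => Real.exp (-s) * (f s) ^ 2 :=
    Filter.Eventually.of_forall fun s => by simp only [Pi.zero_apply]; positivity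
  have hnn2 : (0:ℝ→ℝ) ≤ᵐ[MeasureTheory.volume.restrict (Set.Ioc t (n:ℝ))]
      fun s => Real.exp (-s) * (f' s) ^ 2 :=
    Filter.Eventually.of_forall fun s => by simp only [Pi.zero_apply]; positivity
  have hL1 : (∫⁻ s in Set.Ioc t (n:ℝ), ENNReal.ofReal (Real.exp (-s) * (f s) ^ 2))
      = ENNReal.ofReal (∫ s in Set.Ioc t (n:ℝ), Real.exp (-s) * (f s) ^ 2) :=
    (ofReal_integral_eq_lintegral_ofReal I1 hnn1).symm
  have hL2 : ENNReal.ofReal (∫ s in Set.Ioc t (n:ℝ), Real.exp (-s) * (f' s) ^ 2)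
      = ∫⁻ s in Set.Ioc t (n:ℝ), ENNReal.ofReal (Real.exp (-s) * (f' s) ^ 2) :=
    ofReal_integral_eq_lintegral_ofReal I2 hnn2
  rw [hL1]
  have hkey := finite_interval_bound f f' hderiv hcont t (n:ℝ) ht htn
  have hBnn : 0 ≤ ∫ s in Set.Ioc t (n:ℝ), Real.exp (-s) * (f' s) ^ 2 :=
    setIntegral_nonneg measurableSet_Ioc fun s _ => by positivity
  calc ENNReal.ofReal (∫ s in Set.Ioc t (n:ℝ), Real.exp (-s) * (f s) ^ 2)
      ≤ ENNReal.ofReal (2 * Real.exp (-t) * (f t) ^ 2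
          + 4 * ∫ s in Set.Ioc t (n:ℝ), Real.exp (-s) * (f' s) ^ 2) :=
        ENNReal.ofReal_le_ofReal hkey
    _ = ENNReal.ofReal (2 * Real.exp (-t) * (f t) ^ 2)
          + ENNReal.ofReal (4 * ∫ s in Set.Ioc t (n:ℝ), Real.exp (-s) * (f' s) ^ 2) := by
        rw [ENNReal.ofReal_add (by positivity) (by positivity)]
    _ ≤ ENNReal.ofReal (2 * Real.exp (-t) * (f t) ^ 2)
          + 4 * ∫⁻ s in Set.Ioi t, ENNReal.ofReal (Real.exp (-s) * (f' s) ^ 2) := by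
        gcongr
        rw [ENNReal.ofReal_mul (by norm_num), hL2]
        simp only [ENNReal.ofReal_ofNat]
        gcongr
        exact Set.Ioc_subset_Ioi_self
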